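/- Let N = M × D be a finite group with Z(N) = 1, let s be a prime dividing |M|, and suppose the conjugacy class size in M of every s'-element of M is an s'-number. Then this leads to a contradiction; i.e., if Z(N) = 1 and M is a nontrivial direct factor, then M cannot have the property that every s'-element has s'-class size for a prime s dividing |M| (since then a Sylow s-subgroup S of M would be a direct factor of M with Z(S) ≤ Z(N) = 1, impossible). -/

import Mathlib

def classSet {G : Type*} [Group G] (x : G) : Set G := {y | IsConj x y}

noncomputable def classSize {G : Type*} [Group G] (x : G) : ℕ := Nat.card (classSet x)

open Subgroup MulAction Pointwise

lemma classSize_eq_index {G : Type*} [Group G] (x : G) :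
    classSize x = (Subgroup.centralizer {x}).index := by
  have horb : classSet x = MulAction.orbit (ConjAct G) x := by
    ext y
    simp only [classSet, Set.mem_setOf_eq, MulAction.mem_orbit_iff, ConjAct.smul_def, isConj_iff]
    constructor
    · rintro ⟨c, hc⟩; exact ⟨ConjAct.toConjAct c, by simpa using hc⟩
    · rintro ⟨g, hg⟩; exact ⟨ConjAct.ofConjAct g, hg⟩
  rw [classSize, horb]
  rw [Nat.card_coe_set_eq, ← MulAction.index_stabilizer,
    Subgroup.centralizer_eq_comap_stabilizer]
  exact (Subgroup.index_comap_of_surjective (f := (ConjAct.toConjAct.toMonoidHom : G →* ConjAct G))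
    _ (MulEquiv.surjective _)).symm

lemma exists_sylow_le {G : Type*} [Group G] [Finite G] {s : ℕ} [Fact s.Prime] (C : Subgroup G)
    (hC : ¬ s ∣ C.index) : ∃ T : Sylow s G, (T : Subgroup G) ≤ C := by
  have P : Sylow s C := default
  have hfac : (Nat.card C).factorization s = (Nat.card G).factorization s := by
    have hmul := C.card_mul_index
    have h1 : (Nat.card C : ℕ) ≠ 0 := Nat.card_pos.ne'
    have h2 : C.index ≠ 0 := by
      intro h; rw [h, mul_zero] at hmul; exact (Nat.card_pos (α := G)).ne' hmul.symm
    rw [← hmul, Nat.factorization_mul h1 h2, Finsupp.add_apply,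
      Nat.factorization_eq_zero_of_not_dvd hC, add_zero]
  have hcard : Nat.card ((P : Subgroup C).map C.subtype) = s ^ (Nat.card G).factorization s := by
    rw [Nat.card_congr (Subgroup.equivMapOfInjective _ _ C.subtype_injective).symm.toEquiv,
      P.card_eq_multiplicity, hfac]
  exact ⟨Sylow.ofCard _ hcard, by rw [Sylow.coe_ofCard]; exact map_subtype_le _⟩

lemma exists_decomp {G : Type*} [Group G] [Finite G] {s : ℕ} (hs : s.Prime) (g : G) :
    ∃ (u v : G) (k : ℕ), u ∈ zpowers g ∧ v ∈ zpowers g ∧ g = u * v ∧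
      orderOf u ∣ s ^ k ∧ ¬ s ∣ orderOf v := by
  by_cases hsn : s ∣ orderOf g
  · set n := orderOf g with hn
    have hn0 : n ≠ 0 := (orderOf_pos g).ne'
    set k := n.factorization s with hk
    set m := n / s ^ k with hm
    have hnm : s ^ k * m = n := Nat.ordProj_mul_ordCompl_eq_self n s
    have hsm : ¬ s ∣ m := Nat.not_dvd_ordCompl hs hn0
    have hkpos : 0 < k := hs.factorization_pos_of_dvd hn0 hsn
    have hsk1 : 1 < s ^ k := Nat.one_lt_pow hkpos.ne' hs.one_lt
    have hcop : Nat.Coprime m (s ^ k) := ((Nat.coprime_ordCompl hs hn0).pow_left k).symm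
    obtain ⟨c, -, hc⟩ := Nat.exists_mul_mod_eq_one_of_coprime hcop hsk1
    set a := m * c with ha
    have hdiv := Nat.div_add_mod a (s ^ k)
    have h1a : 1 ≤ a := by omega
    have hdvdn : s ^ k ∣ a - 1 := ⟨a / s ^ k, by omega⟩
    obtain ⟨t, ht⟩ := hdvdn
    have ht' : (a : ℤ) - 1 = (s : ℤ) ^ k * t := by zify [h1a] at ht; push_cast at ht ⊢; linarith
    refine ⟨g ^ (a : ℤ), g ^ (1 - (a : ℤ)), k, zpow_mem (mem_zpowers g) _,
      zpow_mem (mem_zpowers g) _, ?_, ?_, ?_⟩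
    · rw [← zpow_add]; norm_num
    · apply orderOf_dvd_of_pow_eq_one
      rw [← zpow_natCast (g ^ (a : ℤ)), ← zpow_mul, ← orderOf_dvd_iff_zpow_eq_one]
      refine ⟨(c : ℤ), ?_⟩
      rw [← hn, ← hnm, ha]
      push_cast
      ring
    · intro hcon
      apply hsm
      have hvm : (g ^ (1 - (a : ℤ))) ^ (m : ℤ) = 1 := by
        rw [← zpow_mul, ← orderOf_dvd_iff_zpow_eq_one]
        refine ⟨-t, ?_⟩
        rw [← hn, ← hnm]
        push_cast
        linear_combination (-(m : ℤ)) * ht'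
      have hvord : orderOf (g ^ (1 - (a : ℤ))) ∣ m := by
        apply orderOf_dvd_of_pow_eq_one
        rw [← zpow_natCast, hvm]
      exact hcon.trans hvord
  · exact ⟨1, g, 0, one_mem _, mem_zpowers g, (one_mul g).symm, by simp, hsn⟩

lemma conj_cover_eq_top {G : Type*} [Group G] [Finite G] (H : Subgroup G)
    (hc : ∀ g : G, ∃ c : G, c * g * c⁻¹ ∈ H) : H = ⊤ := by
  classical
  cases nonempty_fintype G
  -- the stabilizer of H under the conjugation action contains (the image of) H
  have hHN : (H.map (ConjAct.toConjAct.toMonoidHom : G →* ConjAct G)) ≤ stabilizer (ConjAct G) H := by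
    rintro x ⟨h, hh, rfl⟩
    show _ • H = H
    ext y
    rw [Subgroup.mem_pointwise_smul_iff_inv_smul_mem, ConjAct.smul_def]
    simp only [map_inv, ConjAct.ofConjAct_inv, ConjAct.ofConjAct_toConjAct, inv_inv]
    constructor
    · intro hy
      have := mul_mem (mul_mem hh hy) (inv_mem hh)
      simpa [mul_assoc] using this
    · intro hy
      exact mul_mem (mul_mem (inv_mem hh) hy) hh
  have hidx : (stabilizer (ConjAct G) H).index ∣ H.index := by
    refine (Subgroup.index_dvd_of_le hHN).trans ?_
    rw [Subgroup.index_map_of_injective _ (MulEquiv.injective _),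
      MonoidHom.range_eq_top.mpr (MulEquiv.surjective _), Subgroup.index_top, mul_one]
  -- the (finite) set of conjugates of H
  set T : Finset (Subgroup G) := (Set.toFinite (orbit (ConjAct G) H)).toFinset with hT
  have hTcard : T.card ≤ H.index := by
    have h1 : T.card = (orbit (ConjAct G) H).ncard := (Set.ncard_eq_toFinset_card _ _).symm
    rw [h1, ← MulAction.index_stabilizer]
    exact Nat.le_of_dvd (Nat.pos_of_ne_zero Subgroup.index_ne_zero_of_finite) hidx
  -- every nontrivial element lies in some conjugate, minus the identity
  have hcover : (Finset.univ.erase (1 : G)) ⊆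
      T.biUnion (fun K => ((Set.toFinite (K : Set G)).toFinset.erase 1)) := by
    intro g hg
    rw [Finset.mem_erase] at hg
    obtain ⟨c, hcg⟩ := hc g
    refine Finset.mem_biUnion.mpr ⟨(ConjAct.toConjAct c)⁻¹ • H, ?_, ?_⟩
    · rw [hT, Set.Finite.mem_toFinset]; exact ⟨_, rfl⟩
    · rw [Finset.mem_erase, Set.Finite.mem_toFinset]
      refine ⟨hg.1, ?_⟩
      rw [SetLike.mem_coe, Subgroup.mem_pointwise_smul_iff_inv_smul_mem]
      simpa [ConjAct.smul_def, mul_assoc] using hcg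
  -- the cardinality of each conjugate
  have hcardK : ∀ K ∈ T, ((Set.toFinite (K : Set G)).toFinset.erase 1).card
      = Nat.card H - 1 := by
    intro K hK
    rw [hT, Set.Finite.mem_toFinset] at hK
    obtain ⟨d, rfl⟩ := hK
    rw [Finset.card_erase_of_mem (by rw [Set.Finite.mem_toFinset]; exact one_mem _)]
    congr 1
    rw [← Set.ncard_eq_toFinset_card, ← Nat.card_coe_set_eq]
    exact Nat.card_congr (Subgroup.equivSMul d H).toEquiv.symm
  -- counting
  have hbound : Nat.card G - 1 ≤ H.index * (Nat.card H - 1) := by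
    calc Nat.card G - 1 = (Finset.univ.erase (1 : G)).card := by
          rw [Finset.card_erase_of_mem (Finset.mem_univ _), Finset.card_univ,
            Nat.card_eq_fintype_card]
      _ ≤ (T.biUnion (fun K => ((Set.toFinite (K : Set G)).toFinset.erase 1))).card :=
          Finset.card_le_card hcover
      _ ≤ ∑ K ∈ T, ((Set.toFinite (K : Set G)).toFinset.erase 1).card :=
          Finset.card_biUnion_le
      _ = ∑ _K ∈ T, (Nat.card H - 1) := Finset.sum_congr rfl hcardK
      _ = T.card * (Nat.card H - 1) := by rw [Finset.sum_const, smul_eq_mul]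
      _ ≤ H.index * (Nat.card H - 1) := Nat.mul_le_mul_right _ hTcard
  have key : Nat.card H * H.index = Nat.card G := H.card_mul_index
  have e1 : H.index * (Nat.card H - 1) = Nat.card G - H.index := by
    rw [Nat.mul_sub, mul_one, mul_comm, key]
  have hH1 : 1 ≤ Nat.card H := Nat.one_le_iff_ne_zero.mpr Nat.card_pos.ne'
  have hle : H.index ≤ Nat.card G := by
    rw [← key]; exact Nat.le_mul_of_pos_left _ Nat.card_pos
  have hG1 : 1 ≤ Nat.card G := Nat.one_le_iff_ne_zero.mpr Nat.card_pos.ne'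
  have hi1 : 1 ≤ H.index := Nat.one_le_iff_ne_zero.mpr Subgroup.index_ne_zero_of_finite
  rw [e1] at hbound
  exact Subgroup.index_eq_one.mp (by omega)

theorem stmt17 {M D : Type*} [Group M] [Group D] [Finite M] [Finite D]
    (hZ : Subgroup.center (M × D) = ⊥)
    (s : ℕ) (hs : s.Prime) (hsd : s ∣ Nat.card M)
    (h : ∀ m : M, ¬ s ∣ orderOf m → ¬ s ∣ classSize m) :
    False := by
  haveI : Fact s.Prime := ⟨hs⟩
  -- the center of M is trivial
  have hZM : ∀ m : M, m ∈ Subgroup.center M → m = 1 := by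
    intro m hm
    have hmem : ((m, 1) : M × D) ∈ Subgroup.center (M × D) := by
      rw [Subgroup.mem_center_iff]
      intro g
      ext
      · exact Subgroup.mem_center_iff.mp hm g.1
      · simp
    rw [hZ, Subgroup.mem_bot] at hmem
    exact congrArg Prod.fst hmem
  obtain ⟨S⟩ : Nonempty (Sylow s M) := inferInstance
  have hSbot : (S : Subgroup M) ≠ ⊥ := S.ne_bot_of_dvd_card hsd
  haveI : Nontrivial (S : Subgroup M) := (Subgroup.nontrivial_iff_ne_bot _).mpr hSbot
  haveI := S.2.center_nontrivial
  obtain ⟨z, hz1⟩ := exists_ne (1 : Subgroup.center (S : Subgroup M))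
  set zM : M := ((z : (S : Subgroup M)) : M) with hzMdef
  have hzMne : zM ≠ 1 := by
    intro hcon
    apply hz1
    ext
    exact hcon
  have hzS : zM ∈ (S : Subgroup M) := (z : (S : Subgroup M)).2
  have hzcomm : ∀ w : M, w ∈ (S : Subgroup M) → w * zM = zM * w := by
    intro w hw
    exact congrArg Subtype.val (Subgroup.mem_center_iff.mp z.2 ⟨w, hw⟩)
  set H : Subgroup M := (S : Subgroup M) ⊔ Subgroup.centralizer (S : Set M) with hHdef
  -- every element of M is conjugate into H
  have hcov : ∀ g : M, ∃ c : M, c * g * c⁻¹ ∈ H := by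
    intro g
    obtain ⟨u, v, k, hu, hv, hguv, hus, hvs⟩ := exists_decomp hs g
    have hcs : ¬ s ∣ (Subgroup.centralizer {v}).index := by
      rw [← classSize_eq_index]; exact h v hvs
    obtain ⟨T, hTC⟩ := exists_sylow_le (Subgroup.centralizer {v}) hcs
    -- u and v commute
    obtain ⟨i, hi⟩ := hu
    obtain ⟨j, hj⟩ := hv
    have hcomm_vu : v * u = u * v := by
      rw [← hi, ← hj]; exact ((Commute.refl g).zpow_zpow j i)
    have huC : u ∈ Subgroup.centralizer {v} := by
      rw [Subgroup.mem_centralizer_iff]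
      intro y hy
      rw [Set.mem_singleton_iff] at hy
      subst hy
      exact hcomm_vu
    set C := Subgroup.centralizer {v} with hCdef
    set u' : C := ⟨u, huC⟩ with hu'def
    have hu'ord : orderOf u' ∣ s ^ k := by
      have h1 : orderOf (C.subtype u') = orderOf u' :=
        orderOf_injective C.subtype C.subtype_injective u'
      rw [← h1]; exact hus
    have hpg : IsPGroup s (Subgroup.zpowers u') := by
      intro x
      refine ⟨k, ?_⟩
      apply orderOf_dvd_iff_pow_eq_one.mp
      have h2 : orderOf ((Subgroup.zpowers u').subtype x) = orderOf x :=
        orderOf_injective _ (Subgroup.zpowers u').subtype_injective x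
      rw [← h2]
      exact (orderOf_dvd_of_mem_zpowers x.2).trans hu'ord
    obtain ⟨Q, hQ⟩ := hpg.exists_le_sylow
    set T' : Sylow s C := T.subtype hTC with hT'def
    obtain ⟨d, hd⟩ := MulAction.exists_smul_eq C Q T'
    have hu'Q : u' ∈ Q := hQ (Subgroup.mem_zpowers u')
    have hduT' : d * u' * d⁻¹ ∈ T' := by
      rw [← hd, Sylow.smul_def]
      have heq : d * u' * d⁻¹ = MulAut.conj d • u' := by simp [MulAut.smul_def]
      rw [heq]
      exact Subgroup.smul_mem_pointwise_smul_iff.mpr hu'Q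
    -- back down in M
    set c₀ : M := (d : M) with hc₀def
    have hduT : c₀ * u * c₀⁻¹ ∈ (T : Subgroup M) := by
      have h3 : (d * u' * d⁻¹ : C) ∈ ((T : Subgroup M).subgroupOf C) := by
        rw [← T.coe_subtype hTC]; exact hduT'
      have h4 := Subgroup.mem_subgroupOf.mp h3
      simpa using h4
    have hdv : c₀ * v * c₀⁻¹ = v := by
      have hvd : v * c₀ = c₀ * v :=
        Subgroup.mem_centralizer_iff.mp d.2 v (Set.mem_singleton v)
      rw [← hvd]
      group
    have hvT : v ∈ Subgroup.centralizer (T : Set M) := by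
      rw [Subgroup.mem_centralizer_iff]
      intro t ht
      exact (Subgroup.mem_centralizer_iff.mp (hTC ht) v (Set.mem_singleton v)).symm
    -- conjugate T to S
    obtain ⟨γ, hγ⟩ := MulAction.exists_smul_eq M T S
    have hγmem : ∀ x : M, x ∈ (T : Subgroup M) → γ * x * γ⁻¹ ∈ (S : Subgroup M) := by
      intro x hx
      rw [← hγ, Sylow.smul_def]
      have heq : γ * x * γ⁻¹ = MulAut.conj γ • x := by simp [MulAut.smul_def]
      rw [heq]
      exact Subgroup.smul_mem_pointwise_smul_iff.mpr hx
    have hγcent : γ * v * γ⁻¹ ∈ Subgroup.centralizer ((S : Subgroup M) : Set M) := by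
      rw [Subgroup.mem_centralizer_iff]
      intro w hw
      rw [← hγ, Sylow.smul_def, Sylow.pointwise_smul_def] at hw
      rw [SetLike.mem_coe, Subgroup.mem_pointwise_smul_iff_inv_smul_mem] at hw
      have hw' : γ⁻¹ * w * γ ∈ (T : Subgroup M) := by
        simpa [MulAut.smul_def] using hw
      have hc := Subgroup.mem_centralizer_iff.mp hvT _ hw'
      -- hc : (γ⁻¹ * w * γ) * v = v * (γ⁻¹ * w * γ)
      have : w = γ * (γ⁻¹ * w * γ) * γ⁻¹ := by group
      rw [this]
      calc γ * (γ⁻¹ * w * γ) * γ⁻¹ * (γ * v * γ⁻¹)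
          = γ * ((γ⁻¹ * w * γ) * v) * γ⁻¹ := by group
        _ = γ * (v * (γ⁻¹ * w * γ)) * γ⁻¹ := by rw [hc]
        _ = γ * v * γ⁻¹ * (γ * (γ⁻¹ * w * γ) * γ⁻¹) := by group
    refine ⟨γ * c₀, ?_⟩
    have hconj : (γ * c₀) * g * (γ * c₀)⁻¹
        = (γ * (c₀ * u * c₀⁻¹) * γ⁻¹) * (γ * (c₀ * v * c₀⁻¹) * γ⁻¹) := by
      rw [hguv]; group
    rw [hconj, hdv]
    exact mul_mem (le_sup_left (a := (S : Subgroup M)) (hγmem _ hduT))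
      (le_sup_right (b := Subgroup.centralizer ((S : Subgroup M) : Set M)) hγcent)
  -- conclude : zM is central
  have hHtop := conj_cover_eq_top H hcov
  have hzcen : zM ∈ Subgroup.center M := by
    rw [Subgroup.mem_center_iff]
    intro g
    have hgH : g ∈ H := by rw [hHtop]; exact Subgroup.mem_top g
    have hle : H ≤ Subgroup.centralizer {zM} := by
      rw [hHdef]
      apply sup_le
      · intro w hw
        rw [Subgroup.mem_centralizer_iff]
        intro y hy
        rw [Set.mem_singleton_iff] at hy
        subst hy
        exact (hzcomm w hw).symm
      · intro w hw
        rw [Subgroup.mem_centralizer_iff]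
        intro y hy
        rw [Set.mem_singleton_iff] at hy
        subst hy
        exact Subgroup.mem_centralizer_iff.mp hw zM hzS
    have := Subgroup.mem_centralizer_iff.mp (hle hgH) zM (Set.mem_singleton zM)
    exact this.symm
  exact hzMne (hZM zM hzcen)
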